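/- Let U be a graphon, s ∈ (0,1], and φ : [0,1] → [0,1] the map x ↦ s·x. Then the pull-back U^φ(x,y) := U(sx, sy) is a graphon, and the cut distance satisfies δ_□(U, U^φ) ≤ 2(1/s − 1). -/

import Mathlib

open MeasureTheory

noncomputable def lam : Measure ℝ := volume.restrict (Set.Icc 0 1)

/-- A graphon: a symmetric measurable function `[0,1]² → [0,1]`. -/
def IsGraphon (U : ℝ → ℝ → ℝ) : Prop :=
  Measurable (Function.uncurry U) ∧ (∀ x y, U x y = U y x) ∧
    ∀ x y, U x y ∈ Set.Icc (0:ℝ) 1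

/-- The cut norm of the difference of two kernels:
`d_□(U,V) = sup_{A,B ⊆ [0,1]} |∫_{A×B}(U−V)|`. -/
noncomputable def cutNormDist (U V : ℝ → ℝ → ℝ) : ℝ :=
  sSup {r : ℝ | ∃ A B : Set ℝ, MeasurableSet A ∧ MeasurableSet B ∧
    r = |∫ x in A, ∫ y in B, (U x y - V x y) ∂lam ∂lam|}

/-- The cut distance `δ_□(U,V) = inf_{φ,ψ} d_□(U^φ, V^ψ)`, the infimum being over
measure-preserving maps `φ, ψ : [0,1] → [0,1]`. -/
noncomputable def cutDist (U V : ℝ → ℝ → ℝ) : ℝ :=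
  sInf {r : ℝ | ∃ φ ψ : ℝ → ℝ, MeasurePreserving φ lam lam ∧ MeasurePreserving ψ lam lam ∧
    r = cutNormDist (fun x y => U (φ x) (φ y)) (fun x y => V (ψ x) (ψ y))}

section Aux

open Set

instance : IsFiniteMeasure lam := by
  constructor
  rw [lam, Measure.restrict_apply_univ, Real.volume_Icc]
  norm_num

lemma lam_univ : lam Set.univ = 1 := by
  rw [lam, Measure.restrict_apply_univ, Real.volume_Icc]; norm_num

lemma psi_mp {s : ℝ} (hs : s ∈ Set.Ioc (0:ℝ) 1) :
    MeasurePreserving (fun x => if x ≤ s then x / s else (x - s) / (1 - s)) lam lam := by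
  obtain ⟨hs0, hs1⟩ := hs
  set ψ : ℝ → ℝ := fun x => if x ≤ s then x / s else (x - s) / (1 - s) with hψ
  have hmeas : Measurable ψ := by
    apply Measurable.ite measurableSet_Iic
    · exact measurable_id.div_const s
    · exact (measurable_id.sub_const s).div_const (1 - s)
  refine ⟨hmeas, ?_⟩
  ext E hE
  rw [Measure.map_apply hmeas hE]
  rw [show lam = volume.restrict (Set.Icc 0 1) from rfl,
    Measure.restrict_apply (hmeas hE), Measure.restrict_apply hE]
  have hsplit : ψ ⁻¹' E ∩ Icc 0 1 = (ψ ⁻¹' E ∩ Icc 0 s) ∪ (ψ ⁻¹' E ∩ Ioc s 1) := by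
    rw [← Set.inter_union_distrib_left, Set.Icc_union_Ioc_eq_Icc hs0.le hs1]
  have hdisj : Disjoint (ψ ⁻¹' E ∩ Icc 0 s) (ψ ⁻¹' E ∩ Ioc s 1) := by
    apply Set.disjoint_of_subset inter_subset_right inter_subset_right
    exact (Set.Iic_disjoint_Ioc le_rfl).mono Set.Icc_subset_Iic_self le_rfl
  rw [hsplit, measure_union hdisj ((hmeas hE).inter measurableSet_Ioc)]
  have h1 : ψ ⁻¹' E ∩ Icc 0 s = (· * s⁻¹) ⁻¹' (E ∩ Icc 0 1) := by
    ext x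
    simp only [Set.mem_inter_iff, Set.mem_preimage, Set.mem_Icc, ← div_eq_mul_inv]
    constructor
    · rintro ⟨hxE, hx0, hxs⟩
      rw [hψ] at hxE
      simp only [if_pos hxs] at hxE
      exact ⟨hxE, div_nonneg hx0 hs0.le, (div_le_one hs0).2 hxs⟩
    · rintro ⟨hxE, h0, h1'⟩
      have hx0 : 0 ≤ x := by
        have := (le_div_iff₀ hs0).1 h0; linarith
      have hxs : x ≤ s := (div_le_one hs0).1 h1'
      refine ⟨?_, hx0, hxs⟩
      rw [hψ]; simpa [if_pos hxs] using hxE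
  have hv1 : volume (ψ ⁻¹' E ∩ Icc 0 s) = ENNReal.ofReal s * volume (E ∩ Icc 0 1) := by
    rw [h1, Real.volume_preimage_mul_right (inv_ne_zero hs0.ne'), inv_inv, abs_of_pos hs0]
  have hv2 : volume (ψ ⁻¹' E ∩ Ioc s 1) = ENNReal.ofReal (1 - s) * volume (E ∩ Icc 0 1) := by
    rcases eq_or_lt_of_le hs1 with h | hlt
    · rw [h]
      simp
    · have h1s : (0:ℝ) < 1 - s := by linarith
      have h2 : ψ ⁻¹' E ∩ Ioc s 1 = (fun x => x + (-s)) ⁻¹' ((· * (1 - s)⁻¹) ⁻¹' (E ∩ Ioc 0 1)) := by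
        ext x
        simp only [Set.mem_inter_iff, Set.mem_preimage, Set.mem_Ioc, ← div_eq_mul_inv,
          ← sub_eq_add_neg]
        constructor
        · rintro ⟨hxE, hxs, hx1⟩
          have hns : ¬ x ≤ s := not_le.2 hxs
          rw [hψ] at hxE
          simp only [if_neg hns] at hxE
          refine ⟨hxE, ?_, ?_⟩
          · exact div_pos (by linarith) h1s
          · rw [div_le_one h1s]; linarith
        · rintro ⟨hxE, h0, h1'⟩
          have hxs : s < x := by
            have := (lt_div_iff₀ h1s).1 h0; linarith
          have hx1 : x ≤ 1 := by
            have := (div_le_one h1s).1 h1'; linarith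
          refine ⟨?_, hxs, hx1⟩
          rw [hψ]; simpa [if_neg (not_le.2 hxs)] using hxE
      rw [h2, measure_preimage_add_right volume (-s),
        Real.volume_preimage_mul_right (inv_ne_zero h1s.ne'), inv_inv, abs_of_pos h1s]
      congr 1
      apply le_antisymm
      · exact measure_mono (Set.inter_subset_inter_right _ Set.Ioc_subset_Icc_self)
      · calc volume (E ∩ Icc 0 1) ≤ volume ((E ∩ Ioc 0 1) ∪ {0}) := by
              apply measure_mono
              rintro x ⟨hxE, hx0, hx1⟩
              rcases eq_or_lt_of_le hx0 with h | h
              · exact Or.inr (by simp [← h])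
              · exact Or.inl ⟨hxE, h, hx1⟩
            _ ≤ volume (E ∩ Ioc 0 1) + volume ({0} : Set ℝ) := measure_union_le _ _
            _ = volume (E ∩ Ioc 0 1) := by simp
  rw [hv1, hv2, ← add_mul, ← ENNReal.ofReal_add hs0.le (by linarith)]
  norm_num

lemma cutNormDist_le {U W : ℝ → ℝ → ℝ} {s : ℝ} (hs : s ∈ Set.Ioc (0:ℝ) 1)
    (hbound : ∀ x y, |U x y - W x y| ≤ 1)
    (hzero : ∀ x y, x ≤ s → y ≤ s → U x y - W x y = 0) :
    cutNormDist U W ≤ 2 * (1 / s - 1) := by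
  obtain ⟨hs0, hs1⟩ := hs
  have hfin : 1 - s ^ 2 ≤ 2 * (1 / s - 1) := by
    have h : 2 * (1 / s - 1) = (2 - 2 * s) / s := by field_simp
    rw [h, le_div_iff₀ hs0]
    nlinarith [mul_nonneg (mul_nonneg (sub_nonneg.2 hs1) (sub_nonneg.2 hs1))
      (by linarith : (0:ℝ) ≤ s + 2)]
  have hnn : (0:ℝ) ≤ 2 * (1 / s - 1) := by
    have := one_le_one_div hs0 hs1; linarith
  apply Real.sSup_le _ hnn
  rintro r ⟨A, B, hA, hB, rfl⟩
  set b : ℝ → ℝ := Set.indicator (Set.Ioi s) (fun _ => (1:ℝ)) with hb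
  have hb_int : Integrable b lam := (integrable_const 1).indicator measurableSet_Ioi
  have hb_nonneg : ∀ y, 0 ≤ b y := fun y => Set.indicator_nonneg (fun _ _ => zero_le_one) y
  have hlamIoi : lam (Set.Ioi s) = ENNReal.ofReal (1 - s) := by
    rw [lam, Measure.restrict_apply measurableSet_Ioi]
    have : Set.Ioi s ∩ Set.Icc 0 1 = Set.Ioc s 1 := by
      ext x
      simp only [Set.mem_inter_iff, Set.mem_Ioi, Set.mem_Icc, Set.mem_Ioc]
      constructor
      · rintro ⟨h1, _, h3⟩; exact ⟨h1, h3⟩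
      · rintro ⟨h1, h2⟩; exact ⟨h1, by linarith, h2⟩
    rw [this, Real.volume_Ioc]
  have hbI : ∫ y, b y ∂lam = 1 - s := by
    rw [hb, integral_indicator_const (1:ℝ) measurableSet_Ioi, measureReal_def, hlamIoi, smul_eq_mul, mul_one,
      ENNReal.toReal_ofReal (by linarith)]
  set G : ℝ → ℝ := fun x => if x ≤ s then 1 - s else 1 with hG
  have habs : ∀ (μ : Measure ℝ) (f : ℝ → ℝ), |∫ y, f y ∂μ| ≤ ∫ y, |f y| ∂μ := fun μ f => by
    simpa [Real.norm_eq_abs] using norm_integral_le_integral_norm (μ := μ) f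
  have hG_eq : ∀ x, G x = (1 - s) + s * b x := by
    intro x
    by_cases hx : x ≤ s
    · have hx' : x ∉ Set.Ioi s := by simp only [Set.mem_Ioi, not_lt]; exact hx
      rw [hG, hb]
      simp only [if_pos hx, Set.indicator_of_notMem hx', mul_zero, add_zero]
    · have hx' : x ∈ Set.Ioi s := Set.mem_Ioi.2 (not_le.1 hx)
      rw [hG, hb]
      simp only [if_neg hx, Set.indicator_of_mem hx']
      ring
  have hG_int : Integrable G lam := by
    have : Integrable (fun x => (1 - s) + s * b x) lam :=
      (integrable_const (1 - s)).add (hb_int.const_mul s)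
    exact this.congr (Filter.Eventually.of_forall fun x => (hG_eq x).symm)
  have hG_nonneg : ∀ x, 0 ≤ G x := by
    intro x; rw [hG]; dsimp only; split <;> linarith
  have hGI : ∫ x, G x ∂lam = 1 - s ^ 2 := by
    rw [integral_congr_ae (Filter.Eventually.of_forall hG_eq), integral_add
      (integrable_const (1 - s)) (hb_int.const_mul s), integral_const, measureReal_def, integral_const_mul,
      hbI, lam_univ]
    simp only [ENNReal.toReal_one, one_smul]
    ring
  have hinner : ∀ x, |∫ y in B, (U x y - W x y) ∂lam| ≤ G x := by
    intro x
    by_cases hx : x ≤ s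
    · calc |∫ y in B, (U x y - W x y) ∂lam| ≤ ∫ y in B, |U x y - W x y| ∂lam :=
            habs _ _
        _ ≤ ∫ y in B, b y ∂lam := by
            apply integral_mono_of_nonneg (Filter.Eventually.of_forall fun y => abs_nonneg _)
              (hb_int.integrableOn)
            apply Filter.Eventually.of_forall
            intro y
            show |U x y - W x y| ≤ b y
            by_cases hy : y ≤ s
            · rw [hzero x y hx hy, abs_zero]; exact hb_nonneg y
            · rw [hb, Set.indicator_of_mem (by simpa using not_le.1 hy)]
              exact hbound x y
        _ ≤ ∫ y, b y ∂lam := setIntegral_le_integral hb_int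
            (Filter.Eventually.of_forall hb_nonneg)
        _ = 1 - s := hbI
        _ = G x := by rw [hG]; simp [if_pos hx]
    · calc |∫ y in B, (U x y - W x y) ∂lam| ≤ ∫ y in B, |U x y - W x y| ∂lam :=
            habs _ _
        _ ≤ ∫ y in B, (1:ℝ) ∂lam := by
            apply integral_mono_of_nonneg (Filter.Eventually.of_forall fun y => abs_nonneg _)
              (integrable_const 1)
            exact Filter.Eventually.of_forall fun y => hbound x y
        _ = (lam B).toReal • (1:ℝ) := by rw [setIntegral_const, measureReal_def]
        _ ≤ 1 := by
            rw [smul_eq_mul, mul_one]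
            calc (lam B).toReal ≤ (lam Set.univ).toReal :=
                  ENNReal.toReal_mono (by rw [lam_univ]; exact ENNReal.one_ne_top)
                    (measure_mono (Set.subset_univ B))
              _ = 1 := by rw [lam_univ]; simp
        _ = G x := by rw [hG]; simp [if_neg hx]
  calc |∫ x in A, ∫ y in B, (U x y - W x y) ∂lam ∂lam|
      ≤ ∫ x in A, |∫ y in B, (U x y - W x y) ∂lam| ∂lam := habs _ _
    _ ≤ ∫ x in A, G x ∂lam := by
        apply integral_mono_of_nonneg (Filter.Eventually.of_forall fun x => abs_nonneg _)
          hG_int.integrableOn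
        exact Filter.Eventually.of_forall hinner
    _ ≤ ∫ x, G x ∂lam := setIntegral_le_integral hG_int
        (Filter.Eventually.of_forall hG_nonneg)
    _ = 1 - s ^ 2 := hGI
    _ ≤ 2 * (1 / s - 1) := hfin

end Aux

/-- For a graphon `U` and `s ∈ (0,1]`, the pull-back `U^φ(x,y) = U(sx, sy)` along
`φ : x ↦ s·x` is a graphon, and `δ_□(U, U^φ) ≤ 2(1/s − 1)`. -/
theorem stmt8 (U : ℝ → ℝ → ℝ) (hU : IsGraphon U) (s : ℝ) (hs : s ∈ Set.Ioc (0:ℝ) 1) :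
    IsGraphon (fun x y => U (s * x) (s * y)) ∧
    cutDist U (fun x y => U (s * x) (s * y)) ≤ 2 * (1 / s - 1) := by
  constructor
  · refine ⟨?_, fun x y => hU.2.1 _ _, fun x y => hU.2.2 _ _⟩
    exact hU.1.comp
      ((measurable_const.mul measurable_fst).prodMk (measurable_const.mul measurable_snd))
  · set ψ : ℝ → ℝ := fun x => if x ≤ s then x / s else (x - s) / (1 - s) with hψdef
    have hψ : MeasurePreserving ψ lam lam := psi_mp hs
    apply csInf_le_of_le (b := cutNormDist (fun x y => U (id x) (id y))
      (fun x y => (fun x y => U (s * x) (s * y)) (ψ x) (ψ y)))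
    · refine ⟨0, ?_⟩
      rintro r ⟨φ', ψ', _, _, rfl⟩
      apply Real.sSup_nonneg
      rintro x ⟨A, B, _, _, rfl⟩
      exact abs_nonneg _
    · exact ⟨id, ψ, MeasurePreserving.id lam, hψ, rfl⟩
    · apply cutNormDist_le hs
      · intro x y
        have h1 := hU.2.2 (id x) (id y)
        have h2 := hU.2.2 (s * ψ x) (s * ψ y)
        rw [abs_le]
        constructor
        · linarith [h1.1, h2.2]
        · linarith [h1.2, h2.1]
      · intro x y hx hy
        have hsx : s * ψ x = x := by
          rw [hψdef]; simp only [if_pos hx]; field_simp [hs.1.ne']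
        have hsy : s * ψ y = y := by
          rw [hψdef]; simp only [if_pos hy]; field_simp [hs.1.ne']
        show U (id x) (id y) - U (s * ψ x) (s * ψ y) = 0
        rw [hsx, hsy, id_eq, id_eq, sub_self]
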